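/- arXiv:2411.12601 — 2 statements merged into one kernel-verified Lean document; each statement's English description precedes it below -/
import Mathlib

section
/- Let H=(V,E,W) be a finite hypergraph, p>1, L⊆V nonempty with labels y:L→ℝ, and let u:V→ℝ be admissible. Then u is a minimizer of F_H^{con} if and only if there exist vectors β_k∈ℝ^V, k=1,…,m, with β_k∈argmax_{b∈B_k}⟨b,u⟩, such that for every x_i∈V∖L: Σ_{k=1}^m w_k·(max_{x,x'∈e_k}|u(x)−u(x')|)^{p−1}·β_k(x_i) = 0. -/
open Finset

/-- A finite hypergraph on vertex set `V` with `m` hyperedges: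
each hyperedge is a nonempty finite set of vertices and carries a positive weight. -/
structure WeightedHypergraph (V : Type*) [Fintype V] (m : ℕ) where
  e : Fin m → Finset V
  w : Fin m → ℝ
  e_nonempty : ∀ k, (e k).Nonempty
  w_pos : ∀ k, 0 < w k

variable {V : Type*} [Fintype V] {m : ℕ}

/-- Maximal oscillation of `u` on the hyperedge `e k`:
`max_{x_i, x_j ∈ e_k} |u x_i - u x_j|`. -/
noncomputable def osc (H : WeightedHypergraph V m) (u : V → ℝ) (k : Fin m) : ℝ :=
  (H.e k ×ˢ H.e k).sup' ((H.e_nonempty k).product (H.e_nonempty k))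
    (fun q => |u q.1 - u q.2|)

/-- The hypergraph p-Laplacian regularizer
`F_H(u) = ∑ k w_k (max_{x_i,x_j ∈ e_k} |u x_i - u x_j|)^p`. -/
noncomputable def FH (H : WeightedHypergraph V m) (p : ℝ) (u : V → ℝ) : ℝ :=
  ∑ k : Fin m, H.w k * (osc H u k) ^ p

/-- `u` is admissible for the labeled set `L` with labels `y`. -/
def Admissible (L : Finset V) (y u : V → ℝ) : Prop := ∀ x ∈ L, u x = y x

/-- `u` is a minimizer of the constrained functional `F_H^{con}`. -/
def IsMinimizer (H : WeightedHypergraph V m) (p : ℝ) (L : Finset V) (y u : V → ℝ) : Prop :=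
  Admissible L y u ∧ ∀ v : V → ℝ, Admissible L y v → FH H p u ≤ FH H p v

/-- Connectivity of a hypergraph: any two vertices are linked by a chain of hyperedges
with consecutive nonempty intersections. -/
def WeightedHypergraph.Connected [DecidableEq V] (H : WeightedHypergraph V m) : Prop :=
  ∀ x y : V, ∃ l : ℕ, ∃ ks : Fin (l + 1) → Fin m,
    x ∈ H.e (ks 0) ∧ y ∈ H.e (ks (Fin.last l)) ∧
    ∀ i : Fin l, (H.e (ks i.castSucc) ∩ H.e (ks i.succ)).Nonempty

/-- The set `D(u)` of vertices whose values are rigid: labeled vertices together with the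
unlabeled vertices at which every sufficiently small perturbation strictly increases `F_H`. -/
def Dset [DecidableEq V] (H : WeightedHypergraph V m) (p : ℝ) (L : Finset V) (u : V → ℝ) : Set V :=
  {x | x ∈ L ∨ (x ∉ L ∧ ∃ δ > (0 : ℝ), ∀ ε : ℝ, 0 < |ε| → |ε| < δ →
    FH H p u < FH H p (Function.update u x (u x + ε)))}

/-- φ_p(s) = |s|^{p-2} s for s ≠ 0 and φ_p(0) = 0. -/
noncomputable def phiP (p s : ℝ) : ℝ := if s = 0 then 0 else |s| ^ (p - 2) * s

/-- The simplified hypergraph p-Laplacian operator. -/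
noncomputable def LpH [DecidableEq V] (H : WeightedHypergraph V m) (p : ℝ) (u : V → ℝ) (x : V) : ℝ :=
  ∑ k ∈ Finset.univ.filter (fun k => x ∈ H.e k),
    H.w k * phiP p ((H.e k).sup' (H.e_nonempty k) u + (H.e k).inf' (H.e_nonempty k) u - 2 * u x)

/-- The indicator vector `𝟙_x ∈ ℝ^V`. -/
def ind [DecidableEq V] (x : V) : V → ℝ := fun z => if z = x then 1 else 0

/-- Euclidean inner product on `ℝ^V`. -/
noncomputable def ip (b u : V → ℝ) : ℝ := ∑ x : V, b x * u x

/-- `B_e = conv {𝟙_{x_i} - 𝟙_{x_j} : x_i, x_j ∈ e}`. -/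
def Bset [DecidableEq V] (e : Finset V) : Set (V → ℝ) :=
  convexHull ℝ {b | ∃ xi ∈ e, ∃ xj ∈ e, b = ind xi - ind xj}
set_option linter.unusedSectionVars false

section AuxLemmas

lemma exists_t0 {α : Type*} (Q : Finset α) (hQ : Q.Nonempty) (a b : α → ℝ)
    (hR : (Q.filter (fun q => a q = Q.sup' hQ a)).Nonempty) :
    ∃ t0 > 0, ∀ t : ℝ, 0 ≤ t → t ≤ t0 →
      Q.sup' hQ (fun q => a q + t * b q)
        = Q.sup' hQ a + t * ((Q.filter (fun q => a q = Q.sup' hQ a)).sup' hR b) := by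
  set c := Q.sup' hQ a with hc
  set M := (Q.filter (fun q => a q = c)).sup' hR b with hM
  set K := Q.sup' hQ (fun q => |b q|) + 1 with hK
  have hK0 : 0 < K := by
    have h0 : 0 ≤ Q.sup' hQ (fun q => |b q|) := by
      obtain ⟨q0, hq0⟩ := hQ
      exact le_trans (abs_nonneg (b q0)) (Finset.le_sup' (fun q => |b q|) hq0)
    simp only [hK]; linarith
  have hbK : ∀ q ∈ Q, |b q| ≤ K := fun q hq =>
    le_trans (Finset.le_sup' (fun q => |b q|) hq) (by simp only [hK]; linarith)
  obtain ⟨qM, hqM, hqMb⟩ := Finset.exists_mem_eq_sup' hR b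
  rw [Finset.mem_filter] at hqM
  have hMK : |M| ≤ K := by rw [hM, hqMb]; exact hbK qM hqM.1
  have hge : ∀ t : ℝ, c + t * M ≤ Q.sup' hQ (fun q => a q + t * b q) := by
    intro t
    calc c + t * M = a qM + t * b qM := by rw [hqM.2, hM, hqMb]
      _ ≤ _ := Finset.le_sup' (fun q => a q + t * b q) hqM.1
  by_cases hne : (Q.filter (fun q => ¬ a q = c)).Nonempty
  · set δ := (Q.filter (fun q => ¬ a q = c)).inf' hne (fun q => c - a q) with hδ
    have hδ0 : 0 < δ := by
      rw [hδ, Finset.lt_inf'_iff]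
      intro q hq
      rw [Finset.mem_filter] at hq
      have h1 : a q ≤ c := Finset.le_sup' a hq.1
      have := hq.2
      rw [sub_pos]
      exact lt_of_le_of_ne h1 hq.2
    refine ⟨δ / (2 * K), by positivity, fun t ht htt0 => ?_⟩
    apply le_antisymm _ (hge t)
    apply Finset.sup'_le
    intro q hq
    by_cases hqc : a q = c
    · have hb : b q ≤ M := Finset.le_sup' b (Finset.mem_filter.2 ⟨hq, hqc⟩)
      nlinarith
    · have h1 : δ ≤ c - a q := Finset.inf'_le _ (Finset.mem_filter.2 ⟨hq, hqc⟩)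
      have h2 := abs_le.1 (hbK q hq)
      have h3 := abs_le.1 hMK
      have h4 : t * (2 * K) ≤ δ := by
        rw [← le_div_iff₀ (by positivity)]
        exact htt0
      nlinarith
  · refine ⟨1, one_pos, fun t ht htt0 => ?_⟩
    apply le_antisymm _ (hge t)
    apply Finset.sup'_le
    intro q hq
    have hqc : a q = c := by
      by_contra h
      exact hne ⟨q, Finset.mem_filter.2 ⟨hq, h⟩⟩
    have hb : b q ≤ M := Finset.le_sup' b (Finset.mem_filter.2 ⟨hq, hqc⟩)
    nlinarith


lemma ip_eq (b u : V → ℝ) : ip b u = ∑ x : V, b x * u x := rfl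

lemma FH_eq (H : WeightedHypergraph V m) (p : ℝ) (u : V → ℝ) :
    FH H p u = ∑ k : Fin m, H.w k * (osc H u k) ^ p := rfl

lemma sup'_abs_pairs (s : Finset V) (hs : s.Nonempty) (v : V → ℝ) :
    (s ×ˢ s).sup' (hs.product hs) (fun q => |v q.1 - v q.2|)
      = (s ×ˢ s).sup' (hs.product hs) (fun q => v q.1 - v q.2) := by
  apply le_antisymm
  · apply Finset.sup'_le
    intro q hq
    rw [Finset.mem_product] at hq
    rw [abs_sub_le_iff]
    constructor
    · exact Finset.le_sup' (fun q : V × V => v q.1 - v q.2)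
        (show (q.1, q.2) ∈ s ×ˢ s from Finset.mem_product.2 ⟨hq.1, hq.2⟩)
    · exact Finset.le_sup' (fun q : V × V => v q.1 - v q.2)
        (show (q.2, q.1) ∈ s ×ˢ s from Finset.mem_product.2 ⟨hq.2, hq.1⟩)
  · exact Finset.sup'_mono_fun fun q _ => le_abs_self _

lemma osc_eq (H : WeightedHypergraph V m) (u : V → ℝ) (k : Fin m) :
    osc H u k = (H.e k ×ˢ H.e k).sup' ((H.e_nonempty k).product (H.e_nonempty k))
      (fun q => u q.1 - u q.2) := sup'_abs_pairs _ (H.e_nonempty k) _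

lemma osc_nonneg (H : WeightedHypergraph V m) (u : V → ℝ) (k : Fin m) : 0 ≤ osc H u k := by
  obtain ⟨x, hx⟩ := H.e_nonempty k
  exact le_trans (abs_nonneg _)
    (Finset.le_sup' (fun q : V × V => |u q.1 - u q.2|) (show (x,x) ∈ H.e k ×ˢ H.e k from Finset.mem_product.2 ⟨hx, hx⟩))

lemma ip_ind_sub [DecidableEq V] (xi xj : V) (u : V → ℝ) :
    ip (ind xi - ind xj) u = u xi - u xj := by
  simp only [ip, ind, Pi.sub_apply, sub_mul, ite_mul, one_mul, zero_mul]
  rw [Finset.sum_sub_distrib]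
  simp [Finset.sum_ite_eq']

lemma isLinearMap_ip (u : V → ℝ) : IsLinearMap ℝ (fun b : V → ℝ => ip b u) := by
  constructor
  · intro b1 b2; simp [ip, add_mul, Finset.sum_add_distrib]
  · intro c b; simp [ip, Finset.mul_sum, mul_assoc]

lemma ip_le_osc [DecidableEq V] (H : WeightedHypergraph V m) (u : V → ℝ) (k : Fin m) {b : V → ℝ}
    (hb : b ∈ Bset (H.e k)) : ip b u ≤ osc H u k := by
  have h : Bset (H.e k) ⊆ {b | ip b u ≤ osc H u k} := by
    rw [Bset]
    apply convexHull_min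
    · rintro b ⟨xi, hxi, xj, hxj, rfl⟩
      simp only [Set.mem_setOf_eq, ip_ind_sub]
      rw [osc_eq]
      exact Finset.le_sup' (fun q : V × V => u q.1 - u q.2) (show (xi,xj) ∈ H.e k ×ˢ H.e k from Finset.mem_product.2 ⟨hxi, hxj⟩)
    · exact convex_halfSpace_le (isLinearMap_ip u) _
  exact h hb

lemma exists_osc_pair (H : WeightedHypergraph V m) (u : V → ℝ) (k : Fin m) :
    ∃ q ∈ H.e k ×ˢ H.e k, u q.1 - u q.2 = osc H u k := by
  obtain ⟨q, hq, hq2⟩ := Finset.exists_mem_eq_sup'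
    ((H.e_nonempty k).product (H.e_nonempty k)) (fun q : V × V => u q.1 - u q.2)
  exact ⟨q, hq, by rw [osc_eq, hq2]⟩

lemma tangent_le {p : ℝ} (hp : 1 < p) {a c : ℝ} (ha : 0 ≤ a) (hc : 0 ≤ c) :
    c ^ p + p * c ^ (p - 1) * (a - c) ≤ a ^ p := by
  rcases eq_or_lt_of_le hc with rfl | hc
  · have h1 : (0:ℝ) ^ p = 0 := Real.zero_rpow (by positivity)
    have h2 : (0:ℝ) ^ (p - 1) = 0 := Real.zero_rpow (by intro h; apply absurd h; intro h'; nlinarith)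
    rw [h1, h2]
    simpa using Real.rpow_nonneg ha p
  · have hs : (-1 : ℝ) ≤ a / c - 1 := by
      have : 0 ≤ a / c := div_nonneg ha hc.le
      linarith
    have h := one_add_mul_self_le_rpow_one_add hs hp.le
    rw [show (1 : ℝ) + (a / c - 1) = a / c by ring] at h
    rw [Real.div_rpow ha hc.le] at h
    have hcp : 0 < c ^ p := Real.rpow_pos_of_pos hc p
    have hcc : c ^ p = c ^ (p - 1) * c := by
      rw [← Real.rpow_add_one hc.ne' (p - 1), sub_add_cancel]
    have h2 := mul_le_mul_of_nonneg_right h hcp.le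
    rw [div_mul_cancel₀ _ hcp.ne'] at h2
    calc c ^ p + p * c ^ (p - 1) * (a - c)
        = (1 + p * (a / c - 1)) * c ^ p := by
          rw [hcc]; field_simp
      _ ≤ a ^ p := h2

end AuxLemmas

lemma forward_dir [DecidableEq V] (H : WeightedHypergraph V m) (p : ℝ) (hp : 1 < p)
    (L : Finset V) (y u : V → ℝ) (hu : Admissible L y u)
    (hmin : IsMinimizer H p L y u) :
    ∃ β : Fin m → (V → ℝ),
      (∀ k : Fin m, β k ∈ Bset (H.e k) ∧ ∀ b ∈ Bset (H.e k), ip b u ≤ ip (β k) u) ∧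
      ∀ x : V, x ∉ L →
        ∑ k : Fin m, H.w k * (osc H u k) ^ (p - 1) * β k x = 0 := by
  classical
  by_contra hcon
  push_neg at hcon
  -- The argmax sets
  set A : Fin m → Set (V → ℝ) :=
    fun k => {β | β ∈ Bset (H.e k) ∧ ∀ b ∈ Bset (H.e k), ip b u ≤ ip β u} with hA
  set Ψ : (Fin m → V → ℝ) → (V → ℝ) :=
    fun β x => if x ∈ L then 0 else ∑ k : Fin m, H.w k * (osc H u k) ^ (p - 1) * β k x with hΨ
  set S : Set (V → ℝ) := Ψ '' (Set.univ.pi A) with hS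
  have hBconv : ∀ k, Convex ℝ (Bset (H.e k)) := by
    intro k; rw [Bset]; exact convex_convexHull ℝ _
  have hArw : ∀ k, A k = Bset (H.e k) ∩ ⋂ b ∈ Bset (H.e k), {β | ip b u ≤ ip β u} := by
    intro k
    ext β
    simp only [hA, Set.mem_setOf_eq, Set.mem_inter_iff, Set.mem_iInter]
  have hAconv : ∀ k, Convex ℝ (A k) := by
    intro k
    rw [hArw k]
    exact (hBconv k).inter (convex_iInter₂ fun b _ => convex_halfSpace_ge (isLinearMap_ip u) (ip b u))
  have hBcpt : ∀ k, IsCompact (Bset (H.e k)) := by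
    intro k
    rw [Bset]
    apply Set.Finite.isCompact_convexHull
    have hrw : {b : V → ℝ | ∃ xi ∈ H.e k, ∃ xj ∈ H.e k, b = ind xi - ind xj}
        = (fun q : V × V => ind q.1 - ind q.2) '' ((H.e k : Set V) ×ˢ (H.e k : Set V)) := by
      ext b
      constructor
      · rintro ⟨xi, hxi, xj, hxj, rfl⟩
        exact ⟨(xi, xj), ⟨hxi, hxj⟩, rfl⟩
      · rintro ⟨⟨xi, xj⟩, ⟨hxi, hxj⟩, rfl⟩
        exact ⟨xi, hxi, xj, hxj, rfl⟩
    rw [hrw]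
    exact (((H.e k).finite_toSet).prod ((H.e k).finite_toSet)).image _
  have hipcont : Continuous fun β : V → ℝ => ip β u := by
    simp only [ip_eq]
    exact continuous_finset_sum _ fun x _ => (continuous_apply x).mul continuous_const
  have hAcpt : ∀ k, IsCompact (A k) := by
    intro k
    refine (hBcpt k).of_isClosed_subset ?_ (fun β hβ => hβ.1)
    rw [hArw k]
    exact (hBcpt k).isClosed.inter
      (isClosed_iInter fun b => isClosed_iInter fun _ => isClosed_le continuous_const hipcont)
  have hΨcont : Continuous Ψ := by
    refine continuous_pi fun x => ?_
    simp only [hΨ]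
    by_cases hx : x ∈ L
    · simp only [if_pos hx]; exact continuous_const
    · simp only [if_neg hx]
      exact continuous_finset_sum _ fun k _ =>
        continuous_const.mul ((continuous_apply x).comp (continuous_apply k))
  have hScv : Convex ℝ S := by
    rintro t1 ⟨β1, hβ1, rfl⟩ t2 ⟨β2, hβ2, rfl⟩ a' b' ha' hb' hab
    refine ⟨fun k => a' • β1 k + b' • β2 k, fun k _ => hAconv k
      (hβ1 k (Set.mem_univ k)) (hβ2 k (Set.mem_univ k)) ha' hb' hab, ?_⟩
    funext x
    simp only [hΨ, Pi.add_apply, Pi.smul_apply, smul_eq_mul]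
    by_cases hx : x ∈ L
    · simp [hx]
    · simp only [if_neg hx]
      rw [Finset.mul_sum, Finset.mul_sum, ← Finset.sum_add_distrib]
      exact Finset.sum_congr rfl fun k _ => by ring
  have hScpt : IsCompact S := (isCompact_univ_pi hAcpt).image hΨcont
  have h0S : (0 : V → ℝ) ∉ S := by
    rintro ⟨β, hβpi, hβ0⟩
    have hβA : ∀ k, β k ∈ Bset (H.e k) ∧ ∀ b ∈ Bset (H.e k), ip b u ≤ ip (β k) u := by
      intro k
      have hk := hβpi k (Set.mem_univ k)
      simpa only [hA, Set.mem_setOf_eq] using hk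
    obtain ⟨x, hx, hne⟩ := hcon β hβA
    apply hne
    have hx0 := congrFun hβ0 x
    simpa only [hΨ, Pi.zero_apply, if_neg hx] using hx0
  obtain ⟨f, c0, hfS, hc0⟩ := geometric_hahn_banach_closed_point hScv hScpt.isClosed h0S
  rw [map_zero] at hc0
  set d : V → ℝ := fun x => if x ∈ L then 0 else f (ind x) with hd
  have hfdec : ∀ v : V → ℝ, f v = ∑ x : V, v x * f (ind x) := by
    intro v
    have hv : v = ∑ x : V, v x • ind x := by
      funext z
      rw [Finset.sum_apply]
      simp only [Pi.smul_apply, ind, smul_eq_mul, mul_ite, mul_one, mul_zero]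
      rw [Finset.sum_ite_eq Finset.univ z v]
      simp
    calc f v = f (∑ x : V, v x • ind x) := by rw [← hv]
      _ = ∑ x : V, v x * f (ind x) := by
          rw [map_sum]
          exact Finset.sum_congr rfl fun x _ => by rw [map_smul]; simp [smul_eq_mul]
  have hfΨ : ∀ β : Fin m → V → ℝ,
      f (Ψ β) = ∑ k : Fin m, H.w k * (osc H u k) ^ (p - 1) * ip (β k) d := by
    intro β
    rw [hfdec (Ψ β)]
    have hterm : ∀ x : V, Ψ β x * f (ind x)
        = (∑ k : Fin m, H.w k * (osc H u k) ^ (p - 1) * β k x) * d x := by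
      intro x
      by_cases hx : x ∈ L
      · simp only [hΨ, hd, if_pos hx, zero_mul, mul_zero]
      · simp only [hΨ, hd, if_neg hx]
    rw [Finset.sum_congr rfl fun x _ => hterm x]
    simp only [Finset.sum_mul]
    rw [Finset.sum_comm]
    refine Finset.sum_congr rfl fun k _ => ?_
    rw [ip_eq, Finset.mul_sum]
    exact Finset.sum_congr rfl fun x _ => by ring
  -- per-edge data
  have hQ : ∀ k, ((H.e k ×ˢ H.e k)).Nonempty := fun k => (H.e_nonempty k).product (H.e_nonempty k)
  set a : Fin m → V × V → ℝ := fun _ q => u q.1 - u q.2 with ha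
  set bb : Fin m → V × V → ℝ := fun _ q => d q.1 - d q.2 with hbb
  have hcEq : ∀ k, (H.e k ×ˢ H.e k).sup' (hQ k) (a k) = osc H u k := fun k => (osc_eq H u k).symm
  have hR : ∀ k, ((H.e k ×ˢ H.e k).filter
      (fun q => a k q = (H.e k ×ˢ H.e k).sup' (hQ k) (a k))).Nonempty := by
    intro k
    obtain ⟨q, hq, hq2⟩ := Finset.exists_mem_eq_sup' (hQ k) (a k)
    exact ⟨q, Finset.mem_filter.2 ⟨hq, hq2.symm⟩⟩
  set M : Fin m → ℝ := fun k => ((H.e k ×ˢ H.e k).filter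
      (fun q => a k q = (H.e k ×ˢ H.e k).sup' (hQ k) (a k))).sup' (hR k) (bb k) with hM
  choose F hF0 hFt using fun k => exists_t0 (H.e k ×ˢ H.e k) (hQ k) (a k) (bb k) (hR k)
  set t0 : ℝ := (insert (1:ℝ) (Finset.univ.image F)).min' (Finset.insert_nonempty _ _) with ht0def
  have ht0pos : 0 < t0 := by
    rw [ht0def, Finset.lt_min'_iff]
    intro b hb
    rcases Finset.mem_insert.1 hb with rfl | hb
    · exact one_pos
    · obtain ⟨k, _, rfl⟩ := Finset.mem_image.1 hb
      exact hF0 k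
  have ht0le : ∀ k, t0 ≤ F k := fun k =>
    Finset.min'_le _ _ (Finset.mem_insert_of_mem (Finset.mem_image_of_mem F (Finset.mem_univ k)))
  choose qsel hqsel hqselM using fun k => Finset.exists_mem_eq_sup' (hR k) (bb k)
  have hqselQ : ∀ k, qsel k ∈ H.e k ×ˢ H.e k := fun k => (Finset.mem_filter.1 (hqsel k)).1
  have hqsela : ∀ k, a k (qsel k) = osc H u k := by
    intro k
    have h1 := (Finset.mem_filter.1 (hqsel k)).2
    rw [h1, hcEq k]
  set βsel : Fin m → V → ℝ := fun k => ind (qsel k).1 - ind (qsel k).2 with hβsel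
  have hβselA : ∀ k, βsel k ∈ A k := by
    intro k
    have hqk := Finset.mem_product.1 (hqselQ k)
    simp only [hA, Set.mem_setOf_eq]
    constructor
    · rw [hβsel, Bset]
      exact subset_convexHull ℝ _ ⟨(qsel k).1, hqk.1, (qsel k).2, hqk.2, rfl⟩
    · intro b hb
      calc ip b u ≤ osc H u k := ip_le_osc H u k hb
        _ = ip (βsel k) u := by rw [hβsel, ip_ind_sub]; exact (hqsela k).symm
  have hΨβS : Ψ βsel ∈ S := ⟨βsel, fun k _ => hβselA k, rfl⟩
  have hfneg : f (Ψ βsel) < 0 := lt_trans (hfS _ hΨβS) hc0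
  have hipβd : ∀ k, ip (βsel k) d = M k := by
    intro k
    rw [hβsel, ip_ind_sub, hM]
    exact (hqselM k).symm
  have hfval : f (Ψ βsel) = ∑ k : Fin m, H.w k * (osc H u k) ^ (p - 1) * M k := by
    rw [hfΨ βsel]
    exact Finset.sum_congr rfl fun k _ => by rw [hipβd k]
  have hDneg : (∑ k : Fin m, H.w k * (osc H u k) ^ (p - 1) * M k) < 0 := hfval ▸ hfneg
  -- the oscillation of the perturbed function
  have hosc : ∀ t : ℝ, 0 ≤ t → t ≤ t0 → ∀ k,
      osc H (u + t • d) k = osc H u k + t * M k := by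
    intro t ht htle k
    have h1 := hFt k t ht (le_trans htle (ht0le k))
    have h2 : ∀ q ∈ H.e k ×ˢ H.e k,
        (u + t • d) q.1 - (u + t • d) q.2 = a k q + t * bb k q := by
      intro q _
      simp only [ha, hbb, Pi.add_apply, Pi.smul_apply, smul_eq_mul]
      ring
    calc osc H (u + t • d) k
        = (H.e k ×ˢ H.e k).sup' (hQ k) (fun q => (u + t • d) q.1 - (u + t • d) q.2) :=
          osc_eq H (u + t • d) k
      _ = (H.e k ×ˢ H.e k).sup' (hQ k) (fun q => a k q + t * bb k q) :=
          Finset.sup'_congr (hQ k) rfl h2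
      _ = osc H u k + t * M k := by
          rw [h1, hM]
          congr 1
          exact hcEq k
  -- derivative of the upper model
  have hg : HasDerivAt (fun t : ℝ => ∑ k : Fin m, H.w k * (osc H u k + t * M k) ^ p)
      (∑ k : Fin m, H.w k * (p * (osc H u k) ^ (p - 1) * M k)) 0 := by
    apply HasDerivAt.fun_sum
    intro k _
    have hinner : HasDerivAt (fun t : ℝ => osc H u k + t * M k) (M k) 0 :=
      (hasDerivAt_mul_const (M k)).const_add (osc H u k)
    have houter : HasDerivAt (fun s : ℝ => s ^ p)
        (p * (osc H u k + 0 * M k) ^ (p - 1)) (osc H u k + 0 * M k) :=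
      Real.hasDerivAt_rpow_const (Or.inr hp.le)
    have hcomp := houter.comp 0 hinner
    rw [show osc H u k + 0 * M k = osc H u k by ring] at hcomp
    simp only [Function.comp_def] at hcomp
    exact hcomp.const_mul (H.w k)
  have hDeq : (∑ k : Fin m, H.w k * (p * (osc H u k) ^ (p - 1) * M k))
      = p * (∑ k : Fin m, H.w k * (osc H u k) ^ (p - 1) * M k) := by
    rw [Finset.mul_sum]
    exact Finset.sum_congr rfl fun k _ => by ring
  rw [hDeq] at hg
  have hpD : p * (∑ k : Fin m, H.w k * (osc H u k) ^ (p - 1) * M k) < 0 :=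
    mul_neg_of_pos_of_neg (by linarith) hDneg
  have hslope := hasDerivAt_iff_tendsto_slope.1 hg
  have hslope' := hslope.mono_left
    (nhdsWithin_mono 0 (fun t (ht : t ∈ Set.Ioi (0:ℝ)) => (ne_of_gt ht : t ≠ 0)))
  have h1 : ∀ᶠ t in nhdsWithin (0:ℝ) (Set.Ioi 0),
      slope (fun t : ℝ => ∑ k : Fin m, H.w k * (osc H u k + t * M k) ^ p) 0 t < 0 :=
    hslope'.eventually_lt_const hpD
  have h2 : ∀ᶠ t in nhdsWithin (0:ℝ) (Set.Ioi 0), t ∈ Set.Ioo (0:ℝ) t0 :=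
    Filter.eventually_of_mem (Ioo_mem_nhdsGT_of_mem ⟨le_refl 0, ht0pos⟩) (fun t ht => ht)
  obtain ⟨t, hslt, htIoo⟩ := (h1.and h2).exists
  set g : ℝ → ℝ := fun t : ℝ => ∑ k : Fin m, H.w k * (osc H u k + t * M k) ^ p with hgdef
  have hgt : g t < g 0 := by
    rw [slope_def_field] at hslt
    rcases div_neg_iff.1 hslt with ⟨_, h⟩ | ⟨h, _⟩
    · exfalso; rw [sub_zero] at h; exact absurd htIoo.1 (not_lt.2 h.le)
    · linarith [h]
  have hFHt : FH H p (u + t • d) = g t := by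
    rw [FH_eq, hgdef]
    exact Finset.sum_congr rfl fun k _ => by
      rw [hosc t htIoo.1.le htIoo.2.le k]
  have hFH0 : g 0 = FH H p u := by
    rw [FH_eq, hgdef]
    exact Finset.sum_congr rfl fun k _ => by norm_num
  have hadm : Admissible L y (u + t • d) := by
    intro x hx
    simp only [Pi.add_apply, Pi.smul_apply, smul_eq_mul, hd, if_pos hx, mul_zero, add_zero]
    exact hu x hx
  have := hmin.2 (u + t • d) hadm
  rw [hFHt] at this
  linarith [hgt, hFH0.symm ▸ this]

/-- an admissible `u` minimizes `F_H^{con}` iff there are maximizers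
`β_k ∈ argmax_{b ∈ B_k} ⟨b, u⟩` with
`∑ k w_k (max_{x,x' ∈ e_k} |u x - u x'|)^{p-1} β_k(x_i) = 0` at every unlabeled vertex. -/
theorem minimizer_iff_subgradient [DecidableEq V] (H : WeightedHypergraph V m) (p : ℝ) (hp : 1 < p)
    (L : Finset V) (hL : L.Nonempty) (y u : V → ℝ) (hu : Admissible L y u) :
    IsMinimizer H p L y u ↔
      ∃ β : Fin m → (V → ℝ),
        (∀ k : Fin m, β k ∈ Bset (H.e k) ∧ ∀ b ∈ Bset (H.e k), ip b u ≤ ip (β k) u) ∧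
        ∀ x : V, x ∉ L →
          ∑ k : Fin m, H.w k * (osc H u k) ^ (p - 1) * β k x = 0 := by
  constructor
  · intro hmin
    exact forward_dir H p hp L y u hu hmin
  · rintro ⟨β, hβ, hsum⟩
    refine ⟨hu, fun v hv => ?_⟩
    have hβu : ∀ k, ip (β k) u = osc H u k := by
      intro k
      refine le_antisymm (ip_le_osc H u k (hβ k).1) ?_
      obtain ⟨q, hq, hq2⟩ := exists_osc_pair H u k
      rw [Finset.mem_product] at hq
      have hmem : (ind q.1 - ind q.2 : V → ℝ) ∈ Bset (H.e k) :=
        subset_convexHull ℝ _ ⟨q.1, hq.1, q.2, hq.2, rfl⟩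
      have := (hβ k).2 _ hmem
      rw [ip_ind_sub, hq2] at this
      exact this
    have key : ∀ k, H.w k * (osc H u k) ^ p
        + p * (H.w k * (osc H u k) ^ (p - 1) * (ip (β k) v - ip (β k) u))
        ≤ H.w k * (osc H v k) ^ p := by
      intro k
      have ht := tangent_le hp (osc_nonneg H v k) (osc_nonneg H u k)
      have h2 : ip (β k) v - ip (β k) u ≤ osc H v k - osc H u k := by
        have h3 := ip_le_osc H v k (hβ k).1
        rw [hβu k]
        linarith
      have hcpow : (0:ℝ) ≤ (osc H u k) ^ (p - 1) := Real.rpow_nonneg (osc_nonneg H u k) _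
      have hw := (H.w_pos k).le
      have h5 : H.w k * (osc H u k) ^ (p - 1) * (ip (β k) v - ip (β k) u)
          ≤ H.w k * (osc H u k) ^ (p - 1) * (osc H v k - osc H u k) :=
        mul_le_mul_of_nonneg_left h2 (mul_nonneg hw hcpow)
      have h6 := mul_le_mul_of_nonneg_left h5 (by linarith : (0:ℝ) ≤ p)
      have h7 := mul_le_mul_of_nonneg_left ht hw
      nlinarith [h6, h7]
    have hx0 : ∀ x : V, ∑ k : Fin m,
        (H.w k * (osc H u k) ^ (p - 1) * β k x) * (v x - u x) = 0 := by
      intro x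
      by_cases hx : x ∈ L
      · have : v x - u x = 0 := by rw [hv x hx, hu x hx, sub_self]
        simp [this]
      · rw [← Finset.sum_mul, hsum x hx, zero_mul]
    have hipsub : ∀ k, ip (β k) v - ip (β k) u = ∑ x : V, β k x * (v x - u x) := by
      intro k
      simp [ip, ← Finset.sum_sub_distrib, mul_sub]
    have hsum2 : ∑ k : Fin m,
        p * (H.w k * (osc H u k) ^ (p - 1) * (ip (β k) v - ip (β k) u)) = 0 := by
      calc ∑ k : Fin m, p * (H.w k * (osc H u k) ^ (p - 1) * (ip (β k) v - ip (β k) u))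
          = ∑ k : Fin m, ∑ x : V,
              p * ((H.w k * (osc H u k) ^ (p - 1) * β k x) * (v x - u x)) := by
            refine Finset.sum_congr rfl fun k _ => ?_
            rw [hipsub k, Finset.mul_sum, Finset.mul_sum]
            exact Finset.sum_congr rfl fun x _ => by ring
        _ = ∑ x : V, ∑ k : Fin m,
              p * ((H.w k * (osc H u k) ^ (p - 1) * β k x) * (v x - u x)) := Finset.sum_comm
        _ = 0 := by
            refine Finset.sum_eq_zero fun x _ => ?_
            rw [← Finset.mul_sum, hx0 x, mul_zero]
    have hle := Finset.sum_le_sum (fun k (_ : k ∈ Finset.univ) => key k)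
    rw [Finset.sum_add_distrib, hsum2, add_zero] at hle
    exact hle
end

section
/- Let H=(V,E,W) be a connected finite hypergraph, p>1, L⊆V nonempty with labels y:L→ℝ. If u_1,u_2:V→ℝ both satisfy L^p_H u(x_i)=0 for all x_i∈V∖L and u(x_i)=y_i for all x_i∈L, then u_1=u_2. -/
open Finset

variable {V : Type*} [Fintype V] {m : ℕ}

lemma phiP_zero (p : ℝ) : phiP p 0 = 0 := by simp [phiP]

lemma phiP_odd (p s : ℝ) : phiP p (-s) = - phiP p s := by
  unfold phiP
  rcases eq_or_ne s 0 with h | h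
  · simp [h]
  · rw [if_neg (neg_ne_zero.mpr h), if_neg h, abs_neg]; ring

lemma phiP_of_pos {p s : ℝ} (hs : 0 < s) : phiP p s = s ^ (p - 1) := by
  unfold phiP
  rw [if_neg hs.ne', abs_of_pos hs, ← Real.rpow_add_one hs.ne']
  ring_nf

lemma phiP_pos {p : ℝ} {s : ℝ} (hs : 0 < s) : 0 < phiP p s := by
  rw [phiP_of_pos hs]
  exact Real.rpow_pos_of_pos hs _

lemma phiP_strictMono {p : ℝ} (hp : 1 < p) : StrictMono (phiP p) := by
  have hpos : ∀ s t : ℝ, 0 ≤ s → s < t → phiP p s < phiP p t := by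
    intro s t hs hst
    rcases eq_or_lt_of_le hs with h | h
    · rw [← h, phiP_zero]
      exact phiP_pos (h ▸ hst)
    · rw [phiP_of_pos h, phiP_of_pos (h.trans hst)]
      exact Real.rpow_lt_rpow h.le hst (by linarith)
  intro s t hst
  rcases le_or_gt 0 s with hs | hs
  · exact hpos s t hs hst
  · rcases le_or_gt t 0 with ht | ht
    · have := hpos (-t) (-s) (by linarith) (by linarith)
      rw [phiP_odd, phiP_odd] at this
      linarith
    · have h1 : phiP p s < 0 := by
        have := phiP_pos (p := p) (s := -s) (by linarith)
        rw [phiP_odd] at this; linarith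
      calc phiP p s < 0 := h1
        _ < phiP p t := phiP_pos ht

lemma phiP_nonneg {p : ℝ} (hp : 1 < p) {s : ℝ} (hs : 0 ≤ s) : 0 ≤ phiP p s := by
  rcases eq_or_lt_of_le hs with h | h
  · rw [← h, phiP_zero]
  · exact (phiP_pos h).le

lemma phiP_eq_zero {p : ℝ} (hp : 1 < p) {s : ℝ} (h : phiP p s = 0) : s = 0 :=
  (phiP_strictMono hp).injective (by rw [h, phiP_zero])

lemma solutions_le [DecidableEq V] (H : WeightedHypergraph V m) (hconn : H.Connected)
    (p : ℝ) (hp : 1 < p) (L : Finset V) (hL : L.Nonempty) (y : V → ℝ) (u₁ u₂ : V → ℝ)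
    (h₁ : (∀ x : V, x ∉ L → LpH H p u₁ x = 0) ∧ ∀ x ∈ L, u₁ x = y x)
    (h₂ : (∀ x : V, x ∉ L → LpH H p u₂ x = 0) ∧ ∀ x ∈ L, u₂ x = y x) :
    ∀ z, u₁ z ≤ u₂ z := by
  by_contra hcon
  push_neg at hcon
  obtain ⟨z₀, hz₀⟩ := hcon
  have : Nonempty V := ⟨z₀⟩
  set M := univ.sup' univ_nonempty (fun z => u₁ z - u₂ z) with hMdef
  have hM : ∀ z, u₁ z - u₂ z ≤ M := fun z => le_sup' (fun z => u₁ z - u₂ z) (mem_univ z)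
  have hMpos : 0 < M := lt_of_lt_of_le (by linarith) (hM z₀)
  obtain ⟨zM, -, hzM⟩ := exists_mem_eq_sup' univ_nonempty (fun z => u₁ z - u₂ z)
  have hA : (univ.filter (fun z => u₁ z - u₂ z = M)).Nonempty :=
    ⟨zM, mem_filter.mpr ⟨mem_univ _, hzM.symm⟩⟩
  obtain ⟨x₀, hx₀mem, hx₀min⟩ := Finset.exists_min_image _ u₁ hA
  have hx₀A : u₁ x₀ - u₂ x₀ = M := (mem_filter.mp hx₀mem).2
  set α := u₁ x₀ with hαdef
  have hmin : ∀ z, u₁ z - u₂ z = M → α ≤ u₁ z := fun z hz =>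
    hx₀min z (mem_filter.mpr ⟨mem_univ _, hz⟩)
  have hLA : ∀ z ∈ L, u₁ z - u₂ z ≠ M := by
    intro z hz
    have := h₁.2 z hz
    have := h₂.2 z hz
    intro h
    rw [this] at *
    linarith [h]
  -- key propagation step
  have step : ∀ x, u₁ x - u₂ x = M → u₁ x = α → x ∉ L →
      ∀ k, x ∈ H.e k → ∀ z ∈ H.e k, u₁ z = α ∧ u₁ z - u₂ z = M := by
    intro x hxA hxα hxL k hxk
    have e1 := h₁.1 x hxL
    have e2 := h₂.1 x hxL
    unfold LpH at e1 e2
    have hux : u₁ x = u₂ x + M := by linarith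
    have hsup : ∀ k' : Fin m,
        (H.e k').sup' (H.e_nonempty k') u₁ ≤ (H.e k').sup' (H.e_nonempty k') u₂ + M := by
      intro k'
      apply Finset.sup'_le
      intro z hz
      have h1 : u₁ z ≤ u₂ z + M := by linarith [hM z]
      exact h1.trans (add_le_add_left (le_sup' u₂ hz) M)
    have hinf : ∀ k' : Fin m,
        (H.e k').inf' (H.e_nonempty k') u₁ ≤ (H.e k').inf' (H.e_nonempty k') u₂ + M := by
      intro k'
      obtain ⟨z, hz, hzv⟩ := exists_mem_eq_inf' (H.e_nonempty k') u₂
      calc (H.e k').inf' (H.e_nonempty k') u₁ ≤ u₁ z := inf'_le u₁ hz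
        _ ≤ u₂ z + M := by linarith [hM z]
        _ = (H.e k').inf' (H.e_nonempty k') u₂ + M := by rw [hzv]
    have hts : ∀ k' ∈ univ.filter (fun k => x ∈ H.e k),
        H.w k' * phiP p ((H.e k').sup' (H.e_nonempty k') u₁ +
          (H.e k').inf' (H.e_nonempty k') u₁ - 2 * u₁ x) ≤
        H.w k' * phiP p ((H.e k').sup' (H.e_nonempty k') u₂ +
          (H.e k').inf' (H.e_nonempty k') u₂ - 2 * u₂ x) := by
      intro k' _
      refine mul_le_mul_of_nonneg_left ((phiP_strictMono hp).monotone ?_) (H.w_pos k').le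
      have := hsup k'
      have := hinf k'
      linarith
    have hsums := e1.trans e2.symm
    have htermeq := (Finset.sum_eq_sum_iff_of_le hts).mp hsums
    have heqk : ∀ k' : Fin m, x ∈ H.e k' →
        (H.e k').sup' (H.e_nonempty k') u₁ = (H.e k').sup' (H.e_nonempty k') u₂ + M ∧
        (H.e k').inf' (H.e_nonempty k') u₁ = (H.e k').inf' (H.e_nonempty k') u₂ + M := by
      intro k' hxk'
      have h := htermeq k' (mem_filter.mpr ⟨mem_univ _, hxk'⟩)
      have hw : H.w k' ≠ 0 := (H.w_pos k').ne'
      have hphieq := mul_left_cancel₀ hw h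
      have hseq := (phiP_strictMono hp).injective hphieq
      have := hsup k'
      have := hinf k'
      constructor <;> linarith
    -- the inf of u₁ on each edge containing x equals α
    have hinfα : ∀ k' : Fin m, x ∈ H.e k' →
        (H.e k').inf' (H.e_nonempty k') u₁ = α := by
      intro k' hxk'
      obtain ⟨hsupe, hinfe⟩ := heqk k' hxk'
      obtain ⟨z, hz, hzv⟩ := exists_mem_eq_inf' (H.e_nonempty k') u₂
      have h2 : (H.e k').inf' (H.e_nonempty k') u₁ ≤ u₁ z := inf'_le u₁ hz
      have h1 : u₁ z ≤ u₂ z + M := by linarith [hM z]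
      have hz1 : u₁ z = (H.e k').inf' (H.e_nonempty k') u₁ := by linarith [hzv ▸ hinfe]
      have hzA : u₁ z - u₂ z = M := by linarith [hzv ▸ hinfe]
      have h3 : α ≤ u₁ z := hmin z hzA
      have h4 : (H.e k').inf' (H.e_nonempty k') u₁ ≤ u₁ x := inf'_le u₁ hxk'
      linarith [hxα ▸ h4]
    -- nonnegativity of each term of LpH u₁ x, hence each vanishes
    have hnn : ∀ k' ∈ univ.filter (fun k => x ∈ H.e k),
        0 ≤ H.w k' * phiP p ((H.e k').sup' (H.e_nonempty k') u₁ +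
          (H.e k').inf' (H.e_nonempty k') u₁ - 2 * u₁ x) := by
      intro k' hk'
      have hxk' := (mem_filter.mp hk').2
      have hi := hinfα k' hxk'
      have hs : u₁ x ≤ (H.e k').sup' (H.e_nonempty k') u₁ := le_sup' u₁ hxk'
      refine mul_nonneg (H.w_pos k').le (phiP_nonneg hp ?_)
      rw [hi, ← hxα]
      linarith
    have hzero := (Finset.sum_eq_zero_iff_of_nonneg hnn).mp e1 k
      (mem_filter.mpr ⟨mem_univ _, hxk⟩)
    have hwk : H.w k ≠ 0 := (H.w_pos k).ne'
    have hsz : (H.e k).sup' (H.e_nonempty k) u₁ +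
        (H.e k).inf' (H.e_nonempty k) u₁ - 2 * u₁ x = 0 :=
      phiP_eq_zero hp (by
        rcases mul_eq_zero.mp hzero with h | h
        · exact absurd h hwk
        · exact h)
    have hik := hinfα k hxk
    have hsupα : (H.e k).sup' (H.e_nonempty k) u₁ = α := by
      rw [hik, ← hxα] at hsz; linarith [hxα]
    obtain ⟨hsupe, hinfe⟩ := heqk k hxk
    intro z hz
    have hle : u₁ z ≤ α := hsupα ▸ le_sup' u₁ hz
    have hge : α ≤ u₁ z := hik ▸ inf'_le u₁ hz
    have hu1z : u₁ z = α := le_antisymm hle hge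
    refine ⟨hu1z, ?_⟩
    have h2le : u₂ z ≤ (H.e k).sup' (H.e_nonempty k) u₂ := le_sup' u₂ hz
    have h2ge : (H.e k).inf' (H.e_nonempty k) u₂ ≤ u₂ z := inf'_le u₂ hz
    have : u₂ z = α - M := by
      rw [hsupα] at hsupe; rw [hik] at hinfe
      linarith
    linarith
  -- propagate along a connectivity chain from x₀ to a labeled vertex
  obtain ⟨lv, hlv⟩ := hL
  have hx₀L : x₀ ∉ L := fun h => hLA x₀ h hx₀A
  obtain ⟨l, ks, hx0, hlast, hchain⟩ := hconn x₀ lv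
  have main : ∀ i : Fin (l + 1), ∀ z ∈ H.e (ks i), u₁ z = α ∧ u₁ z - u₂ z = M := by
    intro i
    induction i using Fin.induction with
    | zero => exact step x₀ hx₀A rfl hx₀L (ks 0) hx0
    | succ i ih =>
      obtain ⟨z, hz⟩ := hchain i
      rw [Finset.mem_inter] at hz
      obtain ⟨hzα, hzA⟩ := ih z hz.1
      have hzL : z ∉ L := fun h => hLA z h hzA
      exact step z hzA hzα hzL _ hz.2
  have hfin := (main (Fin.last l) lv hlast).2
  have h1 := h₁.2 lv hlv
  have h2 := h₂.2 lv hlv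
  rw [h1, h2] at hfin
  linarith

/-- uniqueness of solutions to the simplified hypergraph p-Laplacian
equation with Dirichlet data on `L`. -/
theorem pLaplacian_equation_unique [DecidableEq V] (H : WeightedHypergraph V m) (hconn : H.Connected)
    (p : ℝ) (hp : 1 < p) (L : Finset V) (hL : L.Nonempty) (y : V → ℝ) (u₁ u₂ : V → ℝ)
    (h₁ : (∀ x : V, x ∉ L → LpH H p u₁ x = 0) ∧ ∀ x ∈ L, u₁ x = y x)
    (h₂ : (∀ x : V, x ∉ L → LpH H p u₂ x = 0) ∧ ∀ x ∈ L, u₂ x = y x) :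
    u₁ = u₂ := by
  funext z
  exact le_antisymm (solutions_le H hconn p hp L hL y u₁ u₂ h₁ h₂ z)
    (solutions_le H hconn p hp L hL y u₂ u₁ h₂ h₁ z)
end
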